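/- Let Z be a standard normal random variable and let R be a random variable independent of Z whose law has density f_R (the Lévy(0,1/2) density). Fix α > 0 and set X = R^α g(Z). Then P(X ≤ 0) = 0 and, for every x > 0, P(X ≤ x) = 1 - ∫₀^∞ f_R(r) / (1 + x r^{-α}) dr = F_X(x; α). -/

import Mathlib

open MeasureTheory ProbabilityTheory Real Set Filter Topology ENNReal

/-- The standard normal distribution function. -/
noncomputable def Phi (z : ℝ) : ℝ :=
  ∫ t in Set.Iic z, (Real.sqrt (2 * Real.pi))⁻¹ * Real.exp (-(t ^ 2) / 2)

/-- The transformation `g(z) = (1 - Φ(z))⁻¹ - 1`. -/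
noncomputable def g (z : ℝ) : ℝ := (1 - Phi z)⁻¹ - 1

/-- The Lévy(0, 1/2) density. -/
noncomputable def fR (r : ℝ) : ℝ :=
  if 0 < r then (Real.sqrt (4 * Real.pi * r ^ 3))⁻¹ * Real.exp (-(1 / (4 * r))) else 0

/-- The marginal distribution function of the LRSM process. -/
noncomputable def FX (x α : ℝ) : ℝ :=
  1 - ∫ r in Set.Ioi (0:ℝ), fR r / (1 + x * r ^ (-α))

/-- The marginal density of the LRSM process. -/
noncomputable def fX (x α : ℝ) : ℝ :=
  ∫ r in Set.Ioi (0:ℝ), r ^ α * fR r / (x + r ^ α) ^ 2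

lemma Phi_eq (z : ℝ) : Phi z = ∫ t in Set.Iic z, gaussianPDFReal 0 1 t := by
  unfold Phi gaussianPDFReal
  congr 1 with t
  norm_num

lemma pdf_pos (t : ℝ) : 0 < gaussianPDFReal 0 1 t := gaussianPDFReal_pos 0 1 t one_ne_zero

lemma pdf_le (t : ℝ) : gaussianPDFReal 0 1 t ≤ (Real.sqrt (2 * Real.pi))⁻¹ := by
  unfold gaussianPDFReal
  push_cast
  rw [mul_one, show (-(t - 0) ^ 2 / (2 * 1)) = (-(t ^ 2) / 2) by ring]
  calc (√(2 * π))⁻¹ * rexp (-t ^ 2 / 2) ≤ (√(2 * π))⁻¹ * 1 :=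
        mul_le_mul_of_nonneg_left (Real.exp_le_one_iff.2 (by nlinarith [sq_nonneg t]))
          (by positivity)
    _ = (√(2 * π))⁻¹ := mul_one _

lemma pdf_int : Integrable (gaussianPDFReal 0 1) := integrable_gaussianPDFReal 0 1

lemma gauss_Iic (z : ℝ) : gaussianReal 0 1 (Set.Iic z) = ENNReal.ofReal (Phi z) := by
  rw [gaussianReal_apply_eq_integral 0 one_ne_zero, Phi_eq]

lemma Phi_pos (z : ℝ) : 0 < Phi z := by
  rw [Phi_eq]
  rw [setIntegral_pos_iff_support_of_nonneg_ae (ae_of_all _ fun t => (pdf_pos t).le)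
    pdf_int.restrict]
  have : Function.support (gaussianPDFReal 0 1) = Set.univ :=
    Set.eq_univ_of_forall fun t => (pdf_pos t).ne'
  rw [this, Set.univ_inter]
  simp [Real.volume_Iic]

lemma Phi_lt_one (z : ℝ) : Phi z < 1 := by
  have h := intervalIntegral.integral_Iic_add_Ioi (b := z) pdf_int.integrableOn
    pdf_int.integrableOn
  rw [integral_gaussianPDFReal_eq_one 0 one_ne_zero] at h
  have hpos : 0 < ∫ t in Set.Ioi z, gaussianPDFReal 0 1 t := by
    rw [setIntegral_pos_iff_support_of_nonneg_ae (ae_of_all _ fun t => (pdf_pos t).le)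
      pdf_int.restrict]
    have : Function.support (gaussianPDFReal 0 1) = Set.univ :=
      Set.eq_univ_of_forall fun t => (pdf_pos t).ne'
    rw [this, Set.univ_inter]
    simp [Real.volume_Ioi]
  rw [Phi_eq]
  linarith

lemma Phi_strictMono : StrictMono Phi := by
  intro a b hab
  have h := intervalIntegral.integral_Iic_sub_Iic (f := gaussianPDFReal 0 1) (a := a) (b := b)
    (μ := volume) pdf_int.integrableOn pdf_int.integrableOn
  have hpos : 0 < ∫ t in a..b, gaussianPDFReal 0 1 t :=
    intervalIntegral.intervalIntegral_pos_of_pos pdf_int.intervalIntegrable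
      (fun t => pdf_pos t) hab
  rw [Phi_eq, Phi_eq]
  linarith

lemma Phi_lipschitz : LipschitzWith ⟨(Real.sqrt (2 * Real.pi))⁻¹, by positivity⟩ Phi := by
  apply LipschitzWith.of_dist_le_mul
  intro a b
  wlog hab : b ≤ a generalizing a b
  · rw [dist_comm (Phi a) (Phi b), dist_comm a b]; exact this b a (le_of_not_ge hab)
  have h := intervalIntegral.integral_Iic_sub_Iic (f := gaussianPDFReal 0 1) (a := b) (b := a)
    (μ := volume) pdf_int.integrableOn pdf_int.integrableOn
  rw [Real.dist_eq, Real.dist_eq, Phi_eq, Phi_eq, h]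
  have := intervalIntegral.norm_integral_le_of_norm_le_const
    (C := (Real.sqrt (2 * Real.pi))⁻¹) (f := gaussianPDFReal 0 1) (a := b) (b := a)
    (fun t _ => by rw [Real.norm_eq_abs, abs_of_pos (pdf_pos t)]; exact pdf_le t)
  exact this

lemma Phi_continuous : Continuous Phi := Phi_lipschitz.continuous

lemma Phi_tendsto_top : Tendsto (fun n : ℕ => Phi n) atTop (𝓝 1) := by
  have h : Tendsto (fun n : ℕ => gaussianReal 0 1 (Set.Iic (n : ℝ))) atTop
      (𝓝 (gaussianReal 0 1 (⋃ n : ℕ, Set.Iic (n : ℝ)))) :=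
    tendsto_measure_iUnion_atTop (fun m n hmn => Iic_subset_Iic.2 (by exact_mod_cast hmn))
  have hU : (⋃ n : ℕ, Set.Iic (n : ℝ)) = Set.univ := by
    ext x
    simp only [Set.mem_iUnion, Set.mem_Iic, Set.mem_univ, iff_true]
    obtain ⟨n, hn⟩ := exists_nat_ge x
    exact ⟨n, hn⟩
  rw [hU, measure_univ] at h
  simp_rw [gauss_Iic] at h
  have h2 : Tendsto (fun n : ℕ => (ENNReal.ofReal (Phi (n:ℝ))).toReal) atTop
      (𝓝 (1:ℝ≥0∞).toReal) := (ENNReal.tendsto_toReal one_ne_top).comp h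
  simpa [ENNReal.toReal_ofReal (Phi_pos _).le] using h2

lemma Phi_tendsto_bot : Tendsto (fun n : ℕ => Phi (-n)) atTop (𝓝 0) := by
  have h : Tendsto (fun n : ℕ => gaussianReal 0 1 (Set.Iic (-(n : ℝ)))) atTop
      (𝓝 (gaussianReal 0 1 (⋂ n : ℕ, Set.Iic (-(n : ℝ))))) := by
    refine tendsto_measure_iInter_atTop (fun n => measurableSet_Iic.nullMeasurableSet)
      (fun m n hmn => Iic_subset_Iic.2 (by exact_mod_cast neg_le_neg (Nat.cast_le.2 hmn)))
      ⟨0, measure_ne_top _ _⟩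
  have hU : (⋂ n : ℕ, Set.Iic (-(n : ℝ))) = ∅ := by
    ext x
    simp only [Set.mem_iInter, Set.mem_Iic, Set.mem_empty_iff_false, iff_false, not_forall,
      not_le]
    obtain ⟨n, hn⟩ := exists_nat_gt (-x)
    exact ⟨n, by linarith⟩
  rw [hU, measure_empty] at h
  simp_rw [gauss_Iic] at h
  have h2 : Tendsto (fun n : ℕ => (ENNReal.ofReal (Phi (-(n:ℝ)))).toReal) atTop
      (𝓝 (0:ℝ≥0∞).toReal) := (ENNReal.tendsto_toReal zero_ne_top).comp h
  simpa [ENNReal.toReal_ofReal (Phi_pos _).le] using h2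

lemma exists_Phi_eq {p : ℝ} (h0 : 0 < p) (h1 : p < 1) : ∃ z, Phi z = p := by
  obtain ⟨n, hn⟩ := (Phi_tendsto_bot.eventually_lt_const h0).exists
  obtain ⟨m, hm⟩ := (Phi_tendsto_top.eventually_const_lt h1).exists
  have hab : (-(n:ℝ)) ≤ m := by
    by_contra hc
    exact absurd (Phi_strictMono.le_iff_le.2 (le_of_not_ge hc)) (by linarith)
  have := intermediate_value_Icc hab Phi_continuous.continuousOn
  obtain ⟨z, _, hz⟩ := this ⟨hn.le, hm.le⟩
  exact ⟨z, hz⟩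

lemma gauss_level {p : ℝ} (h0 : 0 < p) (h1 : p < 1) :
    gaussianReal 0 1 {z | Phi z ≤ p} = ENNReal.ofReal p := by
  obtain ⟨z₀, hz₀⟩ := exists_Phi_eq h0 h1
  have : {z | Phi z ≤ p} = Set.Iic z₀ := by
    ext z
    rw [← hz₀]
    exact ⟨fun h => Phi_strictMono.le_iff_le.1 h, fun h => Phi_strictMono.le_iff_le.2 h⟩
  rw [this, gauss_Iic, hz₀]

lemma g_eq (z : ℝ) : g z = Phi z / (1 - Phi z) := by
  have h1 : (0:ℝ) < 1 - Phi z := by linarith [Phi_lt_one z]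
  unfold g
  field_simp
  ring

lemma g_pos (z : ℝ) : 0 < g z := by
  rw [g_eq]
  exact div_pos (Phi_pos z) (by linarith [Phi_lt_one z])

lemma g_le_iff {y : ℝ} (hy : 0 < y) (z : ℝ) : g z ≤ y ↔ Phi z ≤ y / (1 + y) := by
  have h1 : (0:ℝ) < 1 - Phi z := by linarith [Phi_lt_one z]
  have hy1 : (0:ℝ) < 1 + y := by linarith
  rw [g_eq, div_le_iff₀ h1, le_div_iff₀ hy1]
  constructor <;> intro h <;> nlinarith

lemma gauss_g_le {y : ℝ} (hy : 0 < y) :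
    gaussianReal 0 1 {z | g z ≤ y} = ENNReal.ofReal (y / (1 + y)) := by
  have hy1 : (0:ℝ) < 1 + y := by linarith
  have : {z | g z ≤ y} = {z | Phi z ≤ y / (1 + y)} := by
    ext z; exact g_le_iff hy z
  rw [this]
  exact gauss_level (div_pos hy hy1) ((div_lt_one hy1).2 (by linarith))

lemma measurable_g : Measurable g :=
  ((measurable_const.sub Phi_continuous.measurable).inv).sub measurable_const

lemma fR_nonneg (r : ℝ) : 0 ≤ fR r := by
  unfold fR; split <;> positivity

lemma measurable_rpow_const (y : ℝ) : Measurable fun x : ℝ => x ^ y := by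
  have h : (fun x : ℝ => x ^ y)
      = fun x => if x < 0 then Real.exp (Real.log x * y) * Real.cos (y * Real.pi)
        else if x = 0 then (if y = 0 then 1 else 0) else Real.exp (Real.log x * y) := by
    funext x
    rcases lt_trichotomy x 0 with h | h | h
    · rw [if_pos h, Real.rpow_def_of_neg h]
    · subst h
      rw [if_neg (lt_irrefl 0), if_pos rfl]
      by_cases hy : y = 0
      · simp [hy]
      · simp [Real.zero_rpow hy, hy]
    · rw [if_neg (not_lt.2 h.le), if_neg h.ne', Real.rpow_def_of_pos h]
  rw [h]
  have h0 : MeasurableSet {a : ℝ | a = 0} := by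
    rw [Set.setOf_eq_eq_singleton]; exact measurableSet_singleton 0
  refine Measurable.ite (measurableSet_lt measurable_id measurable_const)
    (((Real.measurable_log.mul measurable_const).exp).mul measurable_const)
    (Measurable.ite h0 measurable_const ((Real.measurable_log.mul measurable_const).exp))

lemma measurable_fR : Measurable fR := by
  unfold fR
  refine Measurable.ite measurableSet_Ioi ?_ measurable_const
  exact ((measurable_id.pow_const 3 |>.const_mul (4 * Real.pi)).sqrt.inv).mul
    (((measurable_id.const_mul 4).inv.const_mul 1).neg.exp)

/-- If `Z` is standard normal, `R` is independent of `Z` with Lévy(0,1/2)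
density `fR`, `α > 0` and `X = R^α g(Z)`, then `P(X ≤ 0) = 0` and, for every `x > 0`,
`P(X ≤ x) = 1 - ∫₀^∞ fR r / (1 + x r^{-α}) dr = F_X(x; α)`. -/
theorem cdf_of_levy_random_scale_mixture
    {Ω : Type*} [MeasurableSpace Ω] (P : Measure Ω) [IsProbabilityMeasure P]
    (Z R : Ω → ℝ) (hZm : Measurable Z) (hRm : Measurable R)
    (hZ : Measure.map Z P = gaussianReal 0 1)
    (hR : Measure.map R P =
      MeasureTheory.volume.withDensity (fun r => ENNReal.ofReal (fR r)))
    (hindep : IndepFun Z R P)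
    (α : ℝ) (hα : 0 < α) :
    P {ω | R ω ^ α * g (Z ω) ≤ 0} = 0 ∧
    ∀ x : ℝ, 0 < x →
      P {ω | R ω ^ α * g (Z ω) ≤ x}
        = ENNReal.ofReal (1 - ∫ r in Set.Ioi (0:ℝ), fR r / (1 + x * r ^ (-α))) ∧
      P {ω | R ω ^ α * g (Z ω) ≤ x} = ENNReal.ofReal (FX x α) := by
  haveI : IsProbabilityMeasure (Measure.map R P) := Measure.isProbabilityMeasure_map hRm.aemeasurable
  -- measurability of the joint map
  have hfm : Measurable (fun p : ℝ × ℝ => p.2 ^ α * g p.1) :=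
    ((measurable_rpow_const α).comp measurable_snd).mul (measurable_g.comp measurable_fst)
  -- key disintegration
  have key : ∀ x : ℝ, P {ω | R ω ^ α * g (Z ω) ≤ x}
      = ∫⁻ r, gaussianReal 0 1 {z | r ^ α * g z ≤ x} ∂(Measure.map R P) := by
    intro x
    have hS : MeasurableSet {p : ℝ × ℝ | p.2 ^ α * g p.1 ≤ x} :=
      measurableSet_le hfm measurable_const
    have hmap : Measure.map (fun ω => (Z ω, R ω)) P
        = (Measure.map Z P).prod (Measure.map R P) :=
      (indepFun_iff_map_prod_eq_prod_map_map hZm.aemeasurable hRm.aemeasurable).1 hindep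
    have h1 : P {ω | R ω ^ α * g (Z ω) ≤ x}
        = Measure.map (fun ω => (Z ω, R ω)) P {p : ℝ × ℝ | p.2 ^ α * g p.1 ≤ x} := by
      rw [Measure.map_apply (hZm.prodMk hRm) hS]
      rfl
    rw [h1, hmap, hZ, Measure.prod_apply_symm hS]
    rfl
  -- a.e. positivity of r under the law of R
  have hae : ∀ᵐ r ∂(Measure.map R P), 0 < r := by
    rw [hR, ae_iff]
    have hset : {r : ℝ | ¬ 0 < r} = Set.Iic 0 := by
      ext r; simp [not_lt]
    rw [hset, withDensity_apply _ measurableSet_Iic]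
    have hz : ∀ r ∈ Set.Iic (0:ℝ), ENNReal.ofReal (fR r) = (fun _ : ℝ => (0:ℝ≥0∞)) r :=
      fun r hr => by simp [fR, not_lt.2 (Set.mem_Iic.1 hr)]
    rw [setLIntegral_congr_fun measurableSet_Iic hz]
    simp
  constructor
  · rw [key 0]
    have : ∀ᵐ r ∂(Measure.map R P),
        gaussianReal 0 1 {z | r ^ α * g z ≤ 0} = 0 := by
      filter_upwards [hae] with r hr
      have hrα : 0 < r ^ α := Real.rpow_pos_of_pos hr α
      have : {z | r ^ α * g z ≤ 0} = ∅ := by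
        ext z
        simp only [Set.mem_setOf_eq, Set.mem_empty_iff_false, iff_false, not_le]
        exact mul_pos hrα (g_pos z)
      rw [this, measure_empty]
    rw [lintegral_congr_ae this]
    simp
  · intro x hx
    -- total mass facts about fR
    have htot : ∫⁻ r, ENNReal.ofReal (fR r) = 1 := by
      have h1 : Measure.map R P Set.univ = 1 := measure_univ
      rw [hR, withDensity_apply _ MeasurableSet.univ, Measure.restrict_univ] at h1
      exact h1
    have hfRint : Integrable fR := by
      refine ⟨measurable_fR.aestronglyMeasurable, ?_⟩
      rw [hasFiniteIntegral_iff_ofReal (ae_of_all _ fR_nonneg), htot]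
      exact one_lt_top
    have hind : (fun r => ENNReal.ofReal (fR r))
        = (Set.Ioi (0:ℝ)).indicator (fun r => ENNReal.ofReal (fR r)) := by
      funext r
      by_cases h : 0 < r
      · simp [Set.indicator, h]
      · simp [Set.indicator, h, fR]
    have htot' : ∫⁻ r in Set.Ioi (0:ℝ), ENNReal.ofReal (fR r) = 1 := by
      rw [← htot]
      conv_rhs => rw [hind]
      rw [lintegral_indicator measurableSet_Ioi _]
    have hione : ∫ r in Set.Ioi (0:ℝ), fR r = 1 := by
      have h1 : ENNReal.ofReal (∫ r in Set.Ioi (0:ℝ), fR r) = 1 := by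
        rw [ofReal_integral_eq_lintegral_ofReal hfRint.restrict (ae_of_all _ fR_nonneg), htot']
      rw [← ENNReal.ofReal_one] at h1
      exact (ENNReal.ofReal_eq_ofReal_iff
        (integral_nonneg fR_nonneg) zero_le_one).1 h1
    -- the conditional probability for r > 0
    have hx1 : ∀ r : ℝ, 0 < r → gaussianReal 0 1 {z | r ^ α * g z ≤ x}
        = ENNReal.ofReal (1 - 1 / (1 + x * r ^ (-α))) := by
      intro r hr
      have hrα : 0 < r ^ α := Real.rpow_pos_of_pos hr α
      have hq : 0 < x * r ^ (-α) := mul_pos hx (Real.rpow_pos_of_pos hr _)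
      have hqa : x * r ^ (-α) = x / r ^ α := by
        rw [Real.rpow_neg hr.le, div_eq_mul_inv]
      have hset : {z | r ^ α * g z ≤ x} = {z | g z ≤ x * r ^ (-α)} := by
        ext z
        rw [Set.mem_setOf_eq, Set.mem_setOf_eq, hqa, le_div_iff₀ hrα, mul_comm]
      rw [hset, gauss_g_le hq]
      congr 1
      have h1q : (0:ℝ) < 1 + x * r ^ (-α) := by linarith
      field_simp
      ring
    -- the nonneg weight function
    set w : ℝ → ℝ := fun r => 1 - 1 / (1 + x * r ^ (-α)) with hw
    have hwmeas : Measurable w :=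
      measurable_const.sub (measurable_const.div (measurable_const.add
        ((measurable_rpow_const (-α)).const_mul x)))
    have hwbound : ∀ r : ℝ, 0 < r → 0 ≤ w r ∧ w r ≤ 1 := by
      intro r hr
      have hq : 0 < x * r ^ (-α) := mul_pos hx (Real.rpow_pos_of_pos hr _)
      have h1q : (0:ℝ) < 1 + x * r ^ (-α) := by linarith
      constructor
      · have : 1 / (1 + x * r ^ (-α)) ≤ 1 := by
          rw [div_le_one h1q]; linarith
        simp only [hw]; linarith
      · have : 0 ≤ 1 / (1 + x * r ^ (-α)) := by positivity
        simp only [hw]; linarith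
    -- rewrite the lintegral
    have hkey2 : P {ω | R ω ^ α * g (Z ω) ≤ x}
        = ∫⁻ r in Set.Ioi (0:ℝ), ENNReal.ofReal (fR r * w r) := by
      rw [key x]
      have hcong : ∀ᵐ r ∂(Measure.map R P),
          gaussianReal 0 1 {z | r ^ α * g z ≤ x}
            = (Set.Ioi (0:ℝ)).indicator (fun r => ENNReal.ofReal (w r)) r := by
        filter_upwards [hae] with r hr
        rw [Set.indicator_of_mem (Set.mem_Ioi.2 hr), hx1 r hr]
      rw [lintegral_congr_ae hcong, hR,
        lintegral_withDensity_eq_lintegral_mul _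
          measurable_fR.ennreal_ofReal
          ((hwmeas.ennreal_ofReal).indicator measurableSet_Ioi),
        ← lintegral_indicator measurableSet_Ioi _]
      refine lintegral_congr fun r => ?_
      by_cases h : 0 < r
      · simp only [Pi.mul_apply, Set.indicator_of_mem (Set.mem_Ioi.2 h),
          ENNReal.ofReal_mul (fR_nonneg r)]
      · simp only [Pi.mul_apply, Set.indicator_of_notMem (fun hc => h (Set.mem_Ioi.1 hc)),
          mul_zero]
    -- integrability of the two real integrands on Ioi 0
    have hint1 : IntegrableOn (fun r => fR r * w r) (Set.Ioi (0:ℝ)) := by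
      refine Integrable.mono hfRint.restrict ((measurable_fR.mul hwmeas).aestronglyMeasurable) ?_
      rw [ae_restrict_iff' measurableSet_Ioi]
      refine ae_of_all _ (fun r hr => ?_)
      obtain ⟨hw0, hw1⟩ := hwbound r (Set.mem_Ioi.1 hr)
      rw [Real.norm_eq_abs, Real.norm_eq_abs, abs_of_nonneg (mul_nonneg (fR_nonneg r) hw0),
        abs_of_nonneg (fR_nonneg r)]
      calc fR r * w r ≤ fR r * 1 := mul_le_mul_of_nonneg_left hw1 (fR_nonneg r)
        _ = fR r := mul_one _
    have hint2 : IntegrableOn (fun r => fR r / (1 + x * r ^ (-α))) (Set.Ioi (0:ℝ)) := by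
      refine Integrable.mono hfRint.restrict
        ((measurable_fR.div (measurable_const.add
          ((measurable_rpow_const (-α)).const_mul x))).aestronglyMeasurable) ?_
      rw [ae_restrict_iff' measurableSet_Ioi]
      refine ae_of_all _ (fun r hr => ?_)
      have hrr := Set.mem_Ioi.1 hr
      have hq : 0 < x * r ^ (-α) := mul_pos hx (Real.rpow_pos_of_pos hrr _)
      have h1q : (0:ℝ) < 1 + x * r ^ (-α) := by linarith
      rw [Real.norm_eq_abs, Real.norm_eq_abs, abs_of_nonneg (div_nonneg (fR_nonneg r) h1q.le),
        abs_of_nonneg (fR_nonneg r)]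
      exact div_le_self (fR_nonneg r) (by linarith)
    -- the real computation
    have hreal : ∫ r in Set.Ioi (0:ℝ), fR r * w r
        = 1 - ∫ r in Set.Ioi (0:ℝ), fR r / (1 + x * r ^ (-α)) := by
      rw [show (fun r => fR r * w r) = fun r => fR r - fR r / (1 + x * r ^ (-α)) from
        funext fun r => by simp only [hw]; ring]
      rw [integral_sub hfRint.restrict hint2, hione]
    have hnn : 0 ≤ᵐ[volume.restrict (Set.Ioi (0:ℝ))] fun r => fR r * w r :=
      (ae_restrict_iff' measurableSet_Ioi).2
        (ae_of_all _ fun r hr => mul_nonneg (fR_nonneg r) (hwbound r (Set.mem_Ioi.1 hr)).1)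
    have hlr := ofReal_integral_eq_lintegral_ofReal hint1 hnn
    have hfinal : P {ω | R ω ^ α * g (Z ω) ≤ x}
        = ENNReal.ofReal (1 - ∫ r in Set.Ioi (0:ℝ), fR r / (1 + x * r ^ (-α))) := by
      rw [hkey2, ← hlr, hreal]
    exact ⟨hfinal, by rw [hfinal]; rfl⟩
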